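/- Let λ ≠ 0 and b₃ ≠ 0 be complex numbers, and set k(z) = 1/(e^{λz} − 1). Then for any a₂, b₂, c₂ ∈ ℂ the equation 3(b₃k' + λb₃k)e^{λz}z + (a₂k'' + b₂k' + c₂k)e^{λz} + (2λa₂ − b₂)k' − a₂k'' − (λ²a₂ − b₂λ + c₂ − 3b₃)k = 0 fails at some z with e^{λz} ≠ 1. -/

import Mathlib

open Complex

private lemma key_exp_lemma (lam α β c₃ c₂ c₁ c₀ : ℂ) (hlam : lam ≠ 0)
    (h : ∀ z : ℝ, Complex.exp (lam * z) ≠ 1 →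
      α * z * Complex.exp (lam * z) ^ 2 + β * z * Complex.exp (lam * z)
        + c₃ * Complex.exp (lam * z) ^ 3 + c₂ * Complex.exp (lam * z) ^ 2
        + c₁ * Complex.exp (lam * z) + c₀ = 0) : α = 0 := by
  set G : ℂ → ℂ := fun w => α * w * Complex.exp (lam * w) ^ 2 + β * w * Complex.exp (lam * w)
      + c₃ * Complex.exp (lam * w) ^ 3 + c₂ * Complex.exp (lam * w) ^ 2
      + c₁ * Complex.exp (lam * w) + c₀ with hGdef
  have hdiff : Differentiable ℂ G := by
    simp only [hGdef]
    fun_prop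
  have hanal : AnalyticOnNhd ℂ G Set.univ := fun z _ => hdiff.analyticAt z
  set r : ℝ := 1 / ‖lam‖ with hr
  have hlamabs : 0 < ‖lam‖ := norm_pos_iff.mpr hlam
  have hrpos : 0 < r := by positivity
  have hxpos : ∀ n : ℕ, 0 < r / (n + 1) := fun n => by positivity
  have hxne1 : ∀ n : ℕ, Complex.exp (lam * (r / (n + 1) : ℝ)) ≠ 1 := by
    intro n hx
    rw [Complex.exp_eq_one_iff] at hx
    obtain ⟨m, hm⟩ := hx
    have habs : ‖lam * ((r / (n + 1) : ℝ) : ℂ)‖ ≤ 1 := by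
      rw [norm_mul]
      have h1 : ‖((r / (n + 1) : ℝ) : ℂ)‖ = r / (n + 1) := by
        rw [Complex.norm_real, Real.norm_eq_abs, abs_of_pos (hxpos n)]
      rw [h1]
      have h2 : r / (n + 1) ≤ r := by
        apply div_le_self hrpos.le
        linarith [Nat.cast_nonneg (α := ℝ) n]
      calc ‖lam‖ * (r / (n+1)) ≤ ‖lam‖ * r :=
            mul_le_mul_of_nonneg_left h2 (norm_nonneg lam)
        _ = 1 := by
            rw [hr, mul_one_div, div_self hlamabs.ne']
    rw [hm] at habs
    have hm0 : m = 0 := by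
      by_contra hm0
      have h1le : (1 : ℝ) ≤ |(m : ℝ)| := by
        have := Int.one_le_abs (by exact_mod_cast hm0 : m ≠ 0)
        exact_mod_cast this
      have habs2 : ‖(m : ℂ) * (2 * ↑Real.pi * I)‖ = |(m : ℝ)| * (2 * Real.pi) := by
        rw [norm_mul, norm_mul, norm_mul, Complex.norm_I, Complex.norm_intCast, Complex.norm_two,
          Complex.norm_real, Real.norm_eq_abs, abs_of_pos Real.pi_pos, mul_one]
      rw [habs2] at habs
      nlinarith [Real.pi_gt_three]
    rw [hm0] at hm
    simp only [Int.cast_zero, zero_mul, mul_eq_zero, Complex.ofReal_eq_zero] at hm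
    rcases hm with hm | hm
    · exact hlam hm
    · exact absurd hm (hxpos n).ne'
  have hGseq : ∀ n : ℕ, G ((r / (n + 1) : ℝ) : ℂ) = 0 := fun n =>
    h (r / (n + 1)) (hxne1 n)
  have htend : Filter.Tendsto (fun n : ℕ => ((r / (n + 1) : ℝ) : ℂ)) Filter.atTop
      (nhdsWithin 0 {(0 : ℂ)}ᶜ) := by
    rw [tendsto_nhdsWithin_iff]
    constructor
    · have htend0 : Filter.Tendsto (fun n : ℕ => (r / (n + 1) : ℝ)) Filter.atTop (nhds 0) :=
        Filter.Tendsto.div_atTop tendsto_const_nhds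
          (Filter.tendsto_atTop_add_const_right _ 1 tendsto_natCast_atTop_atTop)
      have h2 := (Complex.continuous_ofReal.tendsto 0).comp htend0
      rw [Complex.ofReal_zero] at h2
      exact h2
    · filter_upwards with n
      simp only [Set.mem_compl_iff, Set.mem_singleton_iff]
      exact_mod_cast (hxpos n).ne'
  have hfreq : ∃ᶠ w in nhdsWithin 0 {(0 : ℂ)}ᶜ, G w = 0 :=
    htend.frequently (Filter.Frequently.of_forall hGseq)
  have hG0 : ∀ w : ℂ, G w = 0 := by
    intro w
    have := hanal.eqOn_zero_of_preconnected_of_frequently_eq_zero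
      isPreconnected_univ (Set.mem_univ (0 : ℂ)) hfreq
    exact this (Set.mem_univ w)
  set T : ℂ := 2 * ↑Real.pi * I / lam with hT
  have hTne : T ≠ 0 := by
    apply div_ne_zero _ hlam
    simp [Real.pi_ne_zero, Complex.I_ne_zero]
  have hexpT : ∀ w : ℂ, Complex.exp (lam * (w + T)) = Complex.exp (lam * w) := by
    intro w
    rw [mul_add, Complex.exp_add]
    have : lam * T = 2 * ↑Real.pi * I := by
      rw [hT]; field_simp
    rw [this, Complex.exp_two_pi_mul_I, mul_one]
  have key2 : ∀ w : ℂ, α * Complex.exp (lam * w) ^ 2 + β * Complex.exp (lam * w) = 0 := by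
    intro w
    have h1 := hG0 (w + T)
    have h2 := hG0 w
    rw [hGdef] at h1 h2
    simp only [hexpT] at h1
    have hmul : (α * Complex.exp (lam * w) ^ 2 + β * Complex.exp (lam * w)) * T = 0 := by
      linear_combination h1 - h2
    exact (mul_eq_zero.1 hmul).resolve_right hTne
  have e0 := key2 0
  simp only [mul_zero, Complex.exp_zero, one_pow, mul_one] at e0
  have e1 := key2 (Complex.log 2 / lam)
  have hlog : lam * (Complex.log 2 / lam) = Complex.log 2 := by field_simp
  rw [hlog, Complex.exp_log (by norm_num : (2 : ℂ) ≠ 0)] at e1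
  linear_combination (e1 - 2 * e0) / 2

/-- With `k(z) = 1/(e^{λz} − 1)`, `λ ≠ 0`, `b₃ ≠ 0`, the equation arising from the
`y³`/`y²` coefficients fails at some `z` with `e^{λz} ≠ 1`. -/
theorem stmt_16 (lam b₃ : ℂ) (hlam : lam ≠ 0) (hb₃ : b₃ ≠ 0) :
    ∀ a₂ b₂ c₂ : ℂ, ∃ z : ℝ, Complex.exp (lam * z) ≠ 1 ∧
      ¬ (3 * (b₃ * deriv (fun z : ℝ => (Complex.exp (lam * z) - 1)⁻¹) z
              + lam * b₃ * (Complex.exp (lam * z) - 1)⁻¹) * Complex.exp (lam * z) * z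
          + (a₂ * deriv (deriv (fun z : ℝ => (Complex.exp (lam * z) - 1)⁻¹)) z
              + b₂ * deriv (fun z : ℝ => (Complex.exp (lam * z) - 1)⁻¹) z
              + c₂ * (Complex.exp (lam * z) - 1)⁻¹) * Complex.exp (lam * z)
          + (2 * lam * a₂ - b₂) * deriv (fun z : ℝ => (Complex.exp (lam * z) - 1)⁻¹) z
          - a₂ * deriv (deriv (fun z : ℝ => (Complex.exp (lam * z) - 1)⁻¹)) z
          - (lam ^ 2 * a₂ - b₂ * lam + c₂ - 3 * b₃) * (Complex.exp (lam * z) - 1)⁻¹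
          = 0) := by
  intro a₂ b₂ c₂
  by_contra hcon
  push_neg at hcon
  have hEC : ∀ w : ℂ, HasDerivAt (fun w : ℂ => Complex.exp (lam * w))
      (Complex.exp (lam * w) * lam) w := by
    intro w
    simpa using ((hasDerivAt_id w).const_mul lam).cexp
  have hderiv1 : ∀ z : ℝ, Complex.exp (lam * z) ≠ 1 →
      deriv (fun t : ℝ => (Complex.exp (lam * t) - 1)⁻¹) z
        = -(Complex.exp (lam * z) * lam) / (Complex.exp (lam * z) - 1) ^ 2 := by
    intro z hz
    have hne : Complex.exp (lam * z) - 1 ≠ 0 := sub_ne_zero.2 hz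
    exact ((((hEC z).sub_const 1).inv hne).comp_ofReal).deriv
  have hopen : IsOpen {t : ℝ | Complex.exp (lam * t) ≠ 1} := by
    have hc : Continuous fun t : ℝ => Complex.exp (lam * t) := by fun_prop
    exact isOpen_compl_singleton.preimage hc
  have key_hyp : ∀ z : ℝ, Complex.exp (lam * z) ≠ 1 →
      (-3 * b₃ * lam) * z * Complex.exp (lam * z) ^ 2
        + (3 * b₃ * lam) * z * Complex.exp (lam * z)
        + (a₂ * lam ^ 2 - b₂ * lam + c₂) * Complex.exp (lam * z) ^ 3
        + (-3 * a₂ * lam ^ 2 + 3 * b₂ * lam - 3 * c₂ + 3 * b₃) * Complex.exp (lam * z) ^ 2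
        + (3 * a₂ * lam ^ 2 - 3 * b₂ * lam + 3 * c₂ - 6 * b₃) * Complex.exp (lam * z)
        + (-(a₂ * lam ^ 2) + b₂ * lam - c₂ + 3 * b₃) = 0 := by
    intro z hz
    have hne : Complex.exp (lam * z) - 1 ≠ 0 := sub_ne_zero.2 hz
    have hmem : z ∈ {t : ℝ | Complex.exp (lam * t) ≠ 1} := hz
    have hEv : deriv (fun t : ℝ => (Complex.exp (lam * t) - 1)⁻¹)
        =ᶠ[nhds z] fun t : ℝ => -(Complex.exp (lam * t) * lam) / (Complex.exp (lam * t) - 1) ^ 2 := by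
      filter_upwards [hopen.mem_nhds hmem] with t ht
      exact hderiv1 t ht
    have hd2a : deriv (deriv (fun t : ℝ => (Complex.exp (lam * t) - 1)⁻¹)) z
        = deriv (fun t : ℝ => -(Complex.exp (lam * t) * lam) / (Complex.exp (lam * t) - 1) ^ 2) z :=
      hEv.deriv_eq
    have hnum : HasDerivAt (fun w : ℂ => -(Complex.exp (lam * w) * lam))
        (-(Complex.exp (lam * (z : ℂ)) * lam * lam)) (z : ℂ) := ((hEC (z : ℂ)).mul_const lam).neg
    have hden : HasDerivAt (fun w : ℂ => (Complex.exp (lam * w) - 1) ^ 2)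
        (((2 : ℕ) : ℂ) * (Complex.exp (lam * (z : ℂ)) - 1) ^ (2 - 1)
          * (Complex.exp (lam * (z : ℂ)) * lam)) (z : ℂ) :=
      ((hEC (z : ℂ)).sub_const 1).pow 2
    have hdne : (Complex.exp (lam * (z : ℂ)) - 1) ^ 2 ≠ 0 := pow_ne_zero 2 hne
    have hd2b := hd2a.trans (((hnum.div hden hdne).comp_ofReal).deriv)
    have hd2 : deriv (deriv (fun t : ℝ => (Complex.exp (lam * t) - 1)⁻¹)) z
        = lam ^ 2 * Complex.exp (lam * z) * (Complex.exp (lam * z) + 1)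
          / (Complex.exp (lam * z) - 1) ^ 3 := by
      rw [hd2b]
      rw [div_eq_div_iff (pow_ne_zero 2 hdne) (pow_ne_zero 3 hne)]
      norm_num
      ring
    have h1 : deriv (fun t : ℝ => (Complex.exp (lam * t) - 1)⁻¹) z
        * (Complex.exp (lam * z) - 1) ^ 2 = -(Complex.exp (lam * z) * lam) := by
      rw [hderiv1 z hz]
      exact div_mul_cancel₀ _ (pow_ne_zero 2 hne)
    have h2 : deriv (deriv (fun t : ℝ => (Complex.exp (lam * t) - 1)⁻¹)) z
        * (Complex.exp (lam * z) - 1) ^ 3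
        = lam ^ 2 * Complex.exp (lam * z) * (Complex.exp (lam * z) + 1) := by
      rw [hd2]
      exact div_mul_cancel₀ _ (pow_ne_zero 3 hne)
    have h0 : (Complex.exp (lam * z) - 1)⁻¹ * (Complex.exp (lam * z) - 1) = 1 :=
      inv_mul_cancel₀ hne
    have hE0 := hcon z hz
    linear_combination (Complex.exp (lam * (z : ℝ)) - 1) ^ 3 * hE0
      - (3 * b₃ * Complex.exp (lam * (z : ℝ)) * (z : ℂ) + b₂ * Complex.exp (lam * (z : ℝ))
          + 2 * lam * a₂ - b₂) * (Complex.exp (lam * (z : ℝ)) - 1) * h1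
      - (a₂ * Complex.exp (lam * (z : ℝ)) - a₂) * h2
      - (3 * lam * b₃ * Complex.exp (lam * (z : ℝ)) * (z : ℂ) + c₂ * Complex.exp (lam * (z : ℝ))
          - (lam ^ 2 * a₂ - b₂ * lam + c₂ - 3 * b₃)) * (Complex.exp (lam * (z : ℝ)) - 1) ^ 2 * h0
  have hα := key_exp_lemma lam (-3 * b₃ * lam) (3 * b₃ * lam)
    (a₂ * lam ^ 2 - b₂ * lam + c₂)
    (-3 * a₂ * lam ^ 2 + 3 * b₂ * lam - 3 * c₂ + 3 * b₃)
    (3 * a₂ * lam ^ 2 - 3 * b₂ * lam + 3 * c₂ - 6 * b₃)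
    (-(a₂ * lam ^ 2) + b₂ * lam - c₂ + 3 * b₃) hlam key_hyp
  have h3 : (-3 : ℂ) * b₃ * lam ≠ 0 :=
    mul_ne_zero (mul_ne_zero (by norm_num) hb₃) hlam
  exact h3 hα
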